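/- Let Γ be a subgroup of SU(2,1), Γ̃ its preimage in the central extension G̃ = SU(2,1) ×_σ ℤ, and w a rational number. If ℓ is a multiplier system on Γ of weight w, then the function Φ(g,n) = ℓ(g,τ)·exp(w(2πi·n − j̃(g,τ))) is independent of τ ∈ H and defines a group homomorphism Φ : Γ̃ → ℂ^×, satisfying Φ(I₃,1) = e^{2πi w}. -/

import Mathlib

noncomputable section

open Matrix Complex

/-- The Hermitian form matrix `J`. -/
def Jmat : Matrix (Fin 3) (Fin 3) ℂ := !![0,0,1; 0,1,0; 1,0,0]

/-- The group `SU(2,1)` as a subset of 3×3 complex matrices. -/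
def SU21 : Set (Matrix (Fin 3) (Fin 3) ℂ) :=
  {g | g.det = 1 ∧ gᴴ * Jmat * g = Jmat}

/-- The symmetric space `H = {τ ∈ ℂ² : 2 Re τ₁ + |τ₂|² < 0}`. -/
def UpperH : Set (ℂ × ℂ) := {τ | 2 * τ.1.re + Complex.normSq τ.2 < 0}

/-- The automorphy factor `j(g,τ) = Cτ + D`. -/
def jcocycle (g : Matrix (Fin 3) (Fin 3) ℂ) (τ : ℂ × ℂ) : ℂ :=
  g 2 0 * τ.1 + g 2 1 * τ.2 + g 2 2

/-- The action `g*τ = (Aτ+B)/(Cτ+D)`. -/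
def act (g : Matrix (Fin 3) (Fin 3) ℂ) (τ : ℂ × ℂ) : ℂ × ℂ :=
  ((g 0 0 * τ.1 + g 0 1 * τ.2 + g 0 2) / jcocycle g τ,
   (g 1 0 * τ.1 + g 1 1 * τ.2 + g 1 2) / jcocycle g τ)

/-- The function `X(g)`: minus the bottom-left entry when that is nonzero,
and otherwise the bottom-right entry. -/
def Xfun (g : Matrix (Fin 3) (Fin 3) ℂ) : ℂ :=
  if g 2 0 ≠ 0 then -(g 2 0) else g 2 2

/-- The branch `j̃(g,τ) = log(j(g,τ)/X(g)) + log(X(g))` of `log j(g,τ)`,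
using the principal branch of `log` (imaginary part in `(-π, π]`). -/
def jtilde (g : Matrix (Fin 3) (Fin 3) ℂ) (τ : ℂ × ℂ) : ℂ :=
  Complex.log (jcocycle g τ / Xfun g) + Complex.log (Xfun g)

/-- A fixed base point of `H`. -/
def τ0 : ℂ × ℂ := (-1, 0)

/-- The (complex-valued expression for the) cocycle
`σ(g,h) = (1/2πi)(j̃(gh,τ) − j̃(g,h*τ) − j̃(h,τ))`, evaluated at the base
point `τ0 ∈ H`. -/
def sigmaC (g h : Matrix (Fin 3) (Fin 3) ℂ) : ℂ :=
  (jtilde (g * h) τ0 - jtilde g (act h τ0) - jtilde h τ0) / (2 * Real.pi * Complex.I)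

/-- The integer-valued cocycle `σ` (for `g,h ∈ SU(2,1)` the quantity `sigmaC g h`
is an integer, so taking the floor of its real part recovers it). -/
def sigmaZ (g h : Matrix (Fin 3) (Fin 3) ℂ) : ℤ := ⌊(sigmaC g h).re⌋

/-- The twisted multiplication on `SU(2,1) × ℤ` defining the universal cover. -/
def gmul (p q : Matrix (Fin 3) (Fin 3) ℂ × ℤ) : Matrix (Fin 3) (Fin 3) ℂ × ℤ :=
  (p.1 * q.1, p.2 + q.2 + sigmaZ p.1 q.1)

-- ==================== auxiliary lemmas ====================

lemma su21_vJv (g : Matrix (Fin 3) (Fin 3) ℂ) (hg : g ∈ SU21) (τ : ℂ × ℂ) :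
    (starRingEnd ℂ) (g 0 0 * τ.1 + g 0 1 * τ.2 + g 0 2) * jcocycle g τ
    + (starRingEnd ℂ) (g 1 0 * τ.1 + g 1 1 * τ.2 + g 1 2) * (g 1 0 * τ.1 + g 1 1 * τ.2 + g 1 2)
    + (starRingEnd ℂ) (jcocycle g τ) * (g 0 0 * τ.1 + g 0 1 * τ.2 + g 0 2)
    = (starRingEnd ℂ) τ.1 + (starRingEnd ℂ) τ.2 * τ.2 + τ.1 := by
  obtain ⟨-, hJ⟩ := hg
  have h : ∀ k l : Fin 3, (gᴴ * Jmat * g) k l = Jmat k l := fun k l => congrFun (congrFun hJ k) l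
  have h00 := h 0 0; have h01 := h 0 1; have h02 := h 0 2
  have h10 := h 1 0; have h11 := h 1 1; have h12 := h 1 2
  have h20 := h 2 0; have h21 := h 2 1; have h22 := h 2 2
  simp [Matrix.mul_apply, Fin.sum_univ_three, Matrix.conjTranspose_apply, Jmat,
    Matrix.vecHead, Matrix.vecTail] at h00 h01 h02 h10 h11 h12 h20 h21 h22
  unfold jcocycle
  simp only [_root_.map_add, _root_.map_mul]
  linear_combination ((starRingEnd ℂ) τ.1) * τ.1 * h00 + ((starRingEnd ℂ) τ.1) * τ.2 * h01
    + ((starRingEnd ℂ) τ.1) * h02 + ((starRingEnd ℂ) τ.2) * τ.1 * h10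
    + ((starRingEnd ℂ) τ.2) * τ.2 * h11 + ((starRingEnd ℂ) τ.2) * h12
    + τ.1 * h20 + τ.2 * h21 + h22

lemma su21_Q (g : Matrix (Fin 3) (Fin 3) ℂ) (hg : g ∈ SU21) (τ : ℂ × ℂ) :
    2 * ((starRingEnd ℂ) (g 0 0 * τ.1 + g 0 1 * τ.2 + g 0 2) * jcocycle g τ).re
      + Complex.normSq (g 1 0 * τ.1 + g 1 1 * τ.2 + g 1 2) = 2 * τ.1.re + Complex.normSq τ.2 := by
  have h := congrArg Complex.re (su21_vJv g hg τ)
  set x := g 0 0 * τ.1 + g 0 1 * τ.2 + g 0 2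
  set y := g 1 0 * τ.1 + g 1 1 * τ.2 + g 1 2
  set j := jcocycle g τ
  have e1 : (starRingEnd ℂ) j * x = (starRingEnd ℂ) ((starRingEnd ℂ) x * j) := by
    rw [RingHom.map_mul, Complex.conj_conj]; ring
  have e2 : (starRingEnd ℂ) y * y = (Complex.normSq y : ℂ) :=
    (Complex.normSq_eq_conj_mul_self (z := y)).symm
  have e3 : (starRingEnd ℂ) τ.2 * τ.2 = (Complex.normSq τ.2 : ℂ) :=
    (Complex.normSq_eq_conj_mul_self (z := τ.2)).symm
  rw [e1, e2, e3] at h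
  simp only [Complex.add_re, Complex.conj_re, Complex.ofReal_re] at h
  linarith

lemma jcocycle_ne_zero (g : Matrix (Fin 3) (Fin 3) ℂ) (hg : g ∈ SU21) (τ : ℂ × ℂ)
    (hτ : τ ∈ UpperH) : jcocycle g τ ≠ 0 := by
  intro h0
  have hQ := su21_Q g hg τ
  rw [h0] at hQ
  simp only [mul_zero, Complex.zero_re] at hQ
  have hτ' : 2 * τ.1.re + Complex.normSq τ.2 < 0 := hτ
  nlinarith [Complex.normSq_nonneg (g 1 0 * τ.1 + g 1 1 * τ.2 + g 1 2)]

lemma act_mem (g : Matrix (Fin 3) (Fin 3) ℂ) (hg : g ∈ SU21) (τ : ℂ × ℂ)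
    (hτ : τ ∈ UpperH) : act g τ ∈ UpperH := by
  have hj := jcocycle_ne_zero g hg τ hτ
  have hQ := su21_Q g hg τ
  set x := g 0 0 * τ.1 + g 0 1 * τ.2 + g 0 2
  set y := g 1 0 * τ.1 + g 1 1 * τ.2 + g 1 2
  set j := jcocycle g τ
  have hx : x = (x / j) * j := by field_simp
  have hy : y = (y / j) * j := by field_simp
  have hjc : (starRingEnd ℂ) j ≠ 0 := by simpa using hj
  have h1 : ((starRingEnd ℂ) x * j).re = (x / j).re * Complex.normSq j := by
    have e : (starRingEnd ℂ) x * j = (starRingEnd ℂ) (x / j) * ((Complex.normSq j : ℝ) : ℂ) := by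
      rw [Complex.normSq_eq_conj_mul_self, map_div₀]
      field_simp
      try ring
    rw [e, Complex.mul_re, Complex.ofReal_re, Complex.ofReal_im, mul_zero, sub_zero,
      Complex.conj_re]
  have h2 : Complex.normSq y = Complex.normSq (y / j) * Complex.normSq j := by
    conv_lhs => rw [hy]; rw [Complex.normSq_mul]
  rw [h1, h2] at hQ
  have hτ' : 2 * τ.1.re + Complex.normSq τ.2 < 0 := hτ
  have hjpos : 0 < Complex.normSq j := Complex.normSq_pos.mpr hj
  show 2 * (x / j).re + Complex.normSq (y / j) < 0
  nlinarith

lemma τ0_mem : τ0 ∈ UpperH := by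
  show 2 * (-1 : ℂ).re + Complex.normSq (0 : ℂ) < 0
  norm_num

lemma su21_row (g : Matrix (Fin 3) (Fin 3) ℂ) (hg : g ∈ SU21) :
    g 2 2 * (starRingEnd ℂ) (g 2 0) + g 2 1 * (starRingEnd ℂ) (g 2 1)
      + g 2 0 * (starRingEnd ℂ) (g 2 2) = 0 := by
  obtain ⟨-, hJ⟩ := hg
  have hJJ : Jmat * Jmat = 1 := by
    ext i j; fin_cases i <;> fin_cases j <;>
      simp [Jmat, Matrix.mul_apply, Fin.sum_univ_three, Matrix.one_apply,
        Matrix.vecHead, Matrix.vecTail]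
  have h1 : (Jmat * gᴴ * Jmat) * g = 1 := by
    calc (Jmat * gᴴ * Jmat) * g = Jmat * (gᴴ * Jmat * g) := by
          noncomm_ring [Matrix.mul_assoc]
      _ = Jmat * Jmat := by rw [hJ]
      _ = 1 := hJJ
  have h2 : g * (Jmat * gᴴ * Jmat) = 1 := mul_eq_one_comm.mp h1
  have h3 : g * Jmat * gᴴ = Jmat := by
    have h4 : (g * (Jmat * gᴴ * Jmat)) * Jmat = 1 * Jmat := by rw [h2]
    calc g * Jmat * gᴴ = g * Jmat * gᴴ * (Jmat * Jmat) := by rw [hJJ, Matrix.mul_one]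
      _ = (g * (Jmat * gᴴ * Jmat)) * Jmat := by noncomm_ring [Matrix.mul_assoc]
      _ = 1 * Jmat := h4
      _ = Jmat := Matrix.one_mul Jmat
  have h5 := congrFun (congrFun h3 2) 2
  simp [Matrix.mul_apply, Fin.sum_univ_three, Matrix.conjTranspose_apply, Jmat,
    Matrix.vecHead, Matrix.vecTail] at h5
  linear_combination h5

lemma Xfun_ne_zero (g : Matrix (Fin 3) (Fin 3) ℂ) (hg : g ∈ SU21) : Xfun g ≠ 0 := by
  unfold Xfun
  split_ifs with h
  · simpa using h
  · push_neg at h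
    have hj := jcocycle_ne_zero g hg τ0 τ0_mem
    unfold jcocycle at hj
    rw [h] at hj
    simpa [τ0] using hj

lemma j_div_X_slit (g : Matrix (Fin 3) (Fin 3) ℂ) (hg : g ∈ SU21) (τ : ℂ × ℂ)
    (hτ : τ ∈ UpperH) : jcocycle g τ / Xfun g ∈ Complex.slitPlane := by
  have hj := jcocycle_ne_zero g hg τ hτ
  by_cases hC : g 2 0 = 0
  · -- then g 2 1 = 0 and j = g 2 2 = Xfun g
    have hrow := su21_row g hg
    rw [hC] at hrow
    simp only [map_zero, mul_zero, zero_mul, add_zero, zero_add] at hrow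
    have hD : g 2 1 = 0 := by
      have h2 : ((Complex.normSq (g 2 1) : ℝ) : ℂ) = 0 := by
        rw [← Complex.mul_conj]; exact hrow
      have h3 : Complex.normSq (g 2 1) = 0 := by exact_mod_cast h2
      exact Complex.normSq_eq_zero.mp h3
    have hX : Xfun g = g 2 2 := by unfold Xfun; rw [if_neg (by simpa using hC)]
    have hjval : jcocycle g τ = g 2 2 := by unfold jcocycle; rw [hC, hD]; ring
    have hg22 : g 2 2 ≠ 0 := by rw [hjval] at hj; exact hj
    rw [hjval, hX, div_self hg22]
    exact Complex.one_mem_slitPlane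
  · have hX : Xfun g = -(g 2 0) := by unfold Xfun; rw [if_pos (by simpa using hC)]
    by_contra hmem
    rw [Complex.mem_slitPlane_iff] at hmem
    push_neg at hmem
    obtain ⟨hre, him⟩ := hmem
    set z := jcocycle g τ / Xfun g with hzdef
    have hz : z = ((z.re : ℝ) : ℂ) := Complex.ext rfl (by simpa using him)
    set t : ℝ := -z.re with htdef
    have ht : 0 ≤ t := by simp [htdef]; linarith
    have hXne : Xfun g ≠ 0 := Xfun_ne_zero g hg
    have hjt : jcocycle g τ = g 2 0 * (t : ℂ) := by
      have : jcocycle g τ = z * Xfun g := by rw [hzdef]; field_simp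
      rw [this, hz, hX]
      push_cast [htdef]
      ring
    have hjt' : (starRingEnd ℂ) (jcocycle g τ) = (starRingEnd ℂ) (g 2 0) * (t : ℂ) := by
      rw [hjt, RingHom.map_mul, Complex.conj_ofReal]
    have hrow := su21_row g hg
    unfold jcocycle at hjt hjt'
    simp only [_root_.map_add, _root_.map_mul] at hjt'
    -- complex identity
    have cid : (g 2 0 * (starRingEnd ℂ) (g 2 0)) * (τ.1 + (starRingEnd ℂ) τ.1 + τ.2 * (starRingEnd ℂ) τ.2)
        = 2 * (g 2 0 * (starRingEnd ℂ) (g 2 0)) * (t : ℂ)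
          + ((starRingEnd ℂ) (g 2 0) * τ.2 - (starRingEnd ℂ) (g 2 1))
            * (g 2 0 * (starRingEnd ℂ) τ.2 - g 2 1) := by
      linear_combination ((starRingEnd ℂ) (g 2 0)) * hjt + (g 2 0) * hjt' - hrow
    -- convert to reals
    set u := (starRingEnd ℂ) (g 2 0) * τ.2 - (starRingEnd ℂ) (g 2 1) with hu
    have hu2 : g 2 0 * (starRingEnd ℂ) τ.2 - g 2 1 = (starRingEnd ℂ) u := by
      rw [hu]; simp only [_root_.map_sub, _root_.map_mul, Complex.conj_conj]
    have rid : Complex.normSq (g 2 0) * (2 * τ.1.re + Complex.normSq τ.2)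
        = 2 * Complex.normSq (g 2 0) * t + Complex.normSq u := by
      apply Complex.ofReal_injective
      push_cast
      rw [Complex.normSq_eq_conj_mul_self, Complex.normSq_eq_conj_mul_self,
        Complex.normSq_eq_conj_mul_self]
      have hre1 : τ.1 + (starRingEnd ℂ) τ.1 = 2 * ((τ.1.re : ℝ) : ℂ) := by
        rw [Complex.add_conj]; push_cast; ring
      rw [hu2] at cid
      linear_combination cid - ((starRingEnd ℂ) (g 2 0) * (g 2 0)) * hre1
    have hτ' : 2 * τ.1.re + Complex.normSq τ.2 < 0 := hτ
    have hCpos : 0 < Complex.normSq (g 2 0) := Complex.normSq_pos.mpr hC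
    nlinarith [Complex.normSq_nonneg u]

lemma jtilde_contOn (g : Matrix (Fin 3) (Fin 3) ℂ) (hg : g ∈ SU21) :
    ContinuousOn (jtilde g) UpperH := by
  unfold jtilde
  apply ContinuousOn.add _ continuousOn_const
  apply ContinuousOn.clog
  · apply ContinuousOn.div_const
    unfold jcocycle
    fun_prop
  · exact fun τ hτ => j_div_X_slit g hg τ hτ

lemma upperH_convex : Convex ℝ UpperH := by
  intro τ hτ σ hσ p q hp hq hpq
  have hτ' : 2 * τ.1.re + Complex.normSq τ.2 < 0 := hτ
  have hσ' : 2 * σ.1.re + Complex.normSq σ.2 < 0 := hσ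
  show 2 * (p • τ + q • σ).1.re + Complex.normSq (p • τ + q • σ).2 < 0
  have h1 : (p • τ + q • σ).1.re = p * τ.1.re + q * σ.1.re := by
    simp [Complex.add_re, Complex.smul_re]
  have h2 : Complex.normSq (p • τ + q • σ).2 ≤ p * Complex.normSq τ.2 + q * Complex.normSq σ.2 := by
    have hfst : (p • τ + q • σ).2 = p • τ.2 + q • σ.2 := rfl
    rw [hfst]
    have hn : ‖p • τ.2 + q • σ.2‖ ≤ p * ‖τ.2‖ + q * ‖σ.2‖ := by
      calc ‖p • τ.2 + q • σ.2‖ ≤ ‖p • τ.2‖ + ‖q • σ.2‖ := norm_add_le _ _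
        _ = p * ‖τ.2‖ + q * ‖σ.2‖ := by
            rw [norm_smul, norm_smul, Real.norm_eq_abs, Real.norm_eq_abs,
              _root_.abs_of_nonneg hp, _root_.abs_of_nonneg hq]
    have he : ∀ z : ℂ, Complex.normSq z = ‖z‖ ^ 2 := fun z => by
      rw [Complex.normSq_eq_norm_sq]
    rw [he]
    have := pow_le_pow_left₀ (norm_nonneg _) hn 2
    have key : (p * ‖τ.2‖ + q * ‖σ.2‖) ^ 2 ≤ p * ‖τ.2‖ ^ 2 + q * ‖σ.2‖ ^ 2 := by
      nlinarith [sq_nonneg (‖τ.2‖ - ‖σ.2‖), mul_nonneg hp hq]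
    rw [he, he]
    nlinarith
  have hsum : p * (2 * τ.1.re + Complex.normSq τ.2) + q * (2 * σ.1.re + Complex.normSq σ.2) < 0 := by
    rcases eq_or_lt_of_le hp with hp0 | hp0
    · have hq1 : q = 1 := by linarith
      rw [← hp0, hq1]; simpa using hσ'
    · nlinarith [mul_nonneg hq (le_of_lt (by linarith : (0:ℝ) < -(2 * σ.1.re + Complex.normSq σ.2)))]
  rw [h1]
  linarith

lemma aux_const {f : (ℂ × ℂ) → ℂ} {c : ℂ} {b : ℕ} (hb : b ≠ 0) (hc : c ≠ 0)
    (hcont : ContinuousOn f UpperH) (hfb : ∀ τ ∈ UpperH, f τ ^ b = c)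
    {τ τ' : ℂ × ℂ} (hτ : τ ∈ UpperH) (hτ' : τ' ∈ UpperH) : f τ = f τ' := by
  have hT : ({z : ℂ | z ^ b = c}).Finite := by
    have hsub : {z : ℂ | z ^ b = c} ⊆ {z | (Polynomial.X ^ b - Polynomial.C c).IsRoot z} := by
      intro z hz
      simp only [Set.mem_setOf_eq, Polynomial.IsRoot, Polynomial.eval_sub, Polynomial.eval_pow,
        Polynomial.eval_X, Polynomial.eval_C]
      rw [hz]; ring
    exact (Polynomial.finite_setOf_isRoot
      (Polynomial.X_pow_sub_C_ne_zero (Nat.pos_of_ne_zero hb) c)).subset hsub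
  haveI := hT.to_subtype
  exact upperH_convex.isPreconnected.constant_of_mapsTo (T := {z : ℂ | z ^ b = c}) hT.isDiscrete hcont
    (fun x hx => by simp only [Set.mem_setOf_eq]; exact hfb x hx) hτ hτ'

lemma jcocycle_mul (g h : Matrix (Fin 3) (Fin 3) ℂ) (τ : ℂ × ℂ) (hj : jcocycle h τ ≠ 0) :
    jcocycle (g * h) τ = jcocycle g (act h τ) * jcocycle h τ := by
  unfold jcocycle act jcocycle at *
  simp only [Matrix.mul_apply, Fin.sum_univ_three]
  field_simp
  ring

lemma exp_jtilde (g : Matrix (Fin 3) (Fin 3) ℂ) (hg : g ∈ SU21) (τ : ℂ × ℂ)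
    (hτ : τ ∈ UpperH) : Complex.exp (jtilde g τ) = jcocycle g τ := by
  have hX := Xfun_ne_zero g hg
  have hj := jcocycle_ne_zero g hg τ hτ
  unfold jtilde
  rw [Complex.exp_add, Complex.exp_log (div_ne_zero hj hX), Complex.exp_log hX]
  field_simp

lemma sigmaZ_eq (g h : Matrix (Fin 3) (Fin 3) ℂ) (hg : g ∈ SU21) (hh : h ∈ SU21)
    (hgh : g * h ∈ SU21) :
    (2 * Real.pi * Complex.I) * (sigmaZ g h : ℂ)
      = jtilde (g * h) τ0 - jtilde g (act h τ0) - jtilde h τ0 := by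
  set z := jtilde (g * h) τ0 - jtilde g (act h τ0) - jtilde h τ0 with hz
  have hτ0 := τ0_mem
  have hact : act h τ0 ∈ UpperH := act_mem h hh τ0 hτ0
  have hjh := jcocycle_ne_zero h hh τ0 hτ0
  have hjg := jcocycle_ne_zero g hg (act h τ0) hact
  have hexp : Complex.exp z = 1 := by
    rw [hz, Complex.exp_sub, Complex.exp_sub, exp_jtilde _ hgh _ hτ0, exp_jtilde _ hg _ hact,
      exp_jtilde _ hh _ hτ0, jcocycle_mul g h τ0 hjh]
    field_simp
  obtain ⟨k, hk⟩ := Complex.exp_eq_one_iff.mp hexp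
  have hπ : (2 * (Real.pi : ℂ) * Complex.I) ≠ 0 := by
    simp [Real.pi_ne_zero, Complex.I_ne_zero, Complex.ofReal_ne_zero]
  have hsC : sigmaC g h = (k : ℂ) := by
    unfold sigmaC
    rw [← hz, hk]
    field_simp
  have hsZ : sigmaZ g h = k := by
    unfold sigmaZ
    rw [hsC]
    simp
  rw [hsZ, hk]
  push_cast
  ring


/-- Given a weight-`w` multiplier system `ℓ` on a subgroup `Γ` of `SU(2,1)`,
the function `Φ(g,n) = ℓ(g,τ)·exp(w(2πi·n − j̃(g,τ)))` is independent of
`τ ∈ H`, is a homomorphism for the twisted multiplication on `Γ̃`, and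
satisfies `Φ(I₃,1) = e^{2πi w}`. -/
theorem multiplier_system_gives_character
    (Γ : Set (Matrix (Fin 3) (Fin 3) ℂ)) (hΓsub : Γ ⊆ SU21)
    (hΓone : (1 : Matrix (Fin 3) (Fin 3) ℂ) ∈ Γ)
    (hΓmul : ∀ g ∈ Γ, ∀ h ∈ Γ, g * h ∈ Γ)
    (w : ℚ) (a : ℤ) (b : ℕ) (hb : b ≠ 0) (hw : w = (a : ℚ) / (b : ℚ))
    (ℓ : Matrix (Fin 3) (Fin 3) ℂ → (ℂ × ℂ) → ℂ)
    (hℓne : ∀ g ∈ Γ, ∀ τ ∈ UpperH, ℓ g τ ≠ 0)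
    (hℓmul : ∀ g ∈ Γ, ∀ h ∈ Γ, ∀ τ ∈ UpperH,
      ℓ (g * h) τ = ℓ g (act h τ) * ℓ h τ)
    (χ : Matrix (Fin 3) (Fin 3) ℂ → ℂ)
    (hpow : ∀ g ∈ Γ, ∀ τ ∈ UpperH, ℓ g τ ^ b = χ g * jcocycle g τ ^ a)
    (hcont : ∀ g ∈ Γ, ContinuousOn (ℓ g) UpperH) :
    let Φ : Matrix (Fin 3) (Fin 3) ℂ → ℤ → (ℂ × ℂ) → ℂ := fun g n τ =>
      ℓ g τ * Complex.exp ((w : ℂ) * (2 * Real.pi * Complex.I * n - jtilde g τ))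
    (∀ g ∈ Γ, ∀ n : ℤ, ∀ τ ∈ UpperH, ∀ τ' ∈ UpperH, Φ g n τ = Φ g n τ') ∧
    (∀ g ∈ Γ, ∀ h ∈ Γ, ∀ n m : ℤ, ∀ τ ∈ UpperH,
      Φ (g * h) (n + m + sigmaZ g h) τ = Φ g n τ * Φ h m τ) ∧
    (∀ τ ∈ UpperH, Φ 1 1 τ = Complex.exp (2 * Real.pi * Complex.I * (w : ℂ))) := by
  intro Φ
  have hbC : (b : ℂ) ≠ 0 := Nat.cast_ne_zero.mpr hb
  have hwb : (w : ℂ) * (b : ℂ) = (a : ℂ) := by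
    rw [hw]
    push_cast
    field_simp
  -- the τ-independent part
  have part1 : ∀ g ∈ Γ, ∀ n : ℤ, ∀ τ ∈ UpperH, ∀ τ' ∈ UpperH, Φ g n τ = Φ g n τ' := by
    intro g hgΓ n τ hτ τ' hτ'
    have hg := hΓsub hgΓ
    set f : (ℂ × ℂ) → ℂ := fun σ => ℓ g σ * Complex.exp (-(w : ℂ) * jtilde g σ) with hf
    have hfeq : ∀ σ : ℂ × ℂ, Φ g n σ
        = f σ * Complex.exp ((w : ℂ) * (2 * Real.pi * Complex.I * n)) := by
      intro σ
      show ℓ g σ * Complex.exp ((w : ℂ) * (2 * Real.pi * Complex.I * n - jtilde g σ)) = _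
      rw [hf]
      simp only
      rw [show (w : ℂ) * (2 * Real.pi * Complex.I * n - jtilde g σ)
          = (-(w : ℂ) * jtilde g σ) + (w : ℂ) * (2 * Real.pi * Complex.I * n) by ring,
        Complex.exp_add]
      ring
    have hχ : ∀ σ ∈ UpperH, f σ ^ b = χ g := by
      intro σ hσ
      have hj := jcocycle_ne_zero g hg σ hσ
      rw [hf]
      simp only
      rw [mul_pow, ← Complex.exp_nat_mul, hpow g hgΓ σ hσ]
      have he : ((b : ℕ) : ℂ) * (-(w : ℂ) * jtilde g σ) = ((-a : ℤ) : ℂ) * jtilde g σ := by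
        push_cast
        linear_combination (- jtilde g σ) * hwb
      rw [he, Complex.exp_int_mul, exp_jtilde g hg σ hσ]
      rw [mul_assoc, ← zpow_add₀ hj]
      simp
    have hfne : f τ ≠ 0 := by
      rw [hf]
      exact mul_ne_zero (hℓne g hgΓ τ hτ) (Complex.exp_ne_zero _)
    have hχne : χ g ≠ 0 := by
      rw [← hχ τ hτ]
      exact pow_ne_zero _ hfne
    have hfcont : ContinuousOn f UpperH := by
      rw [hf]
      exact (hcont g hgΓ).mul ((continuousOn_const.mul (jtilde_contOn g hg)).cexp)
    rw [hfeq τ, hfeq τ', aux_const hb hχne hfcont hχ hτ hτ']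
  refine ⟨part1, ?_, ?_⟩
  · -- homomorphism
    intro g hgΓ h hhΓ n m τ hτ
    have hg := hΓsub hgΓ
    have hh := hΓsub hhΓ
    have hghΓ := hΓmul g hgΓ h hhΓ
    have hgh := hΓsub hghΓ
    have hτ0 := τ0_mem
    have hact : act h τ0 ∈ UpperH := act_mem h hh τ0 hτ0
    rw [part1 (g * h) hghΓ _ τ hτ τ0 hτ0, part1 g hgΓ n τ hτ _ hact,
      part1 h hhΓ m τ hτ τ0 hτ0]
    show ℓ (g * h) τ0 * Complex.exp ((w : ℂ) * (2 * Real.pi * Complex.I * ((n + m + sigmaZ g h : ℤ) : ℂ) - jtilde (g * h) τ0))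
      = (ℓ g (act h τ0) * Complex.exp ((w : ℂ) * (2 * Real.pi * Complex.I * n - jtilde g (act h τ0))))
        * (ℓ h τ0 * Complex.exp ((w : ℂ) * (2 * Real.pi * Complex.I * m - jtilde h τ0)))
    rw [hℓmul g hgΓ h hhΓ τ0 hτ0]
    have hσ := sigmaZ_eq g h hg hh hgh
    rw [mul_mul_mul_comm, ← Complex.exp_add]
    congr 2
    push_cast
    linear_combination (w : ℂ) * hσ
  · -- identity element
    intro τ hτ
    have hj1 : jcocycle 1 τ = 1 := by
      unfold jcocycle
      simp [Matrix.one_apply]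
    have hact1 : act 1 τ = τ := by
      unfold act
      rw [hj1]
      simp [Matrix.one_apply]
    have hl1 : ℓ 1 τ = 1 := by
      have h1 := hℓmul 1 hΓone 1 hΓone τ hτ
      rw [one_mul, hact1] at h1
      have hne := hℓne 1 hΓone τ hτ
      have h2 : ℓ 1 τ * 1 = ℓ 1 τ * ℓ 1 τ := by rw [mul_one]; exact h1
      exact (mul_left_cancel₀ hne h2).symm
    have hX1 : Xfun 1 = 1 := by
      unfold Xfun
      simp [Matrix.one_apply]
    have hjt1 : jtilde 1 τ = 0 := by
      unfold jtilde
      rw [hj1, hX1]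
      simp
    show ℓ 1 τ * Complex.exp ((w : ℂ) * (2 * Real.pi * Complex.I * ((1 : ℤ) : ℂ) - jtilde 1 τ))
      = Complex.exp (2 * Real.pi * Complex.I * (w : ℂ))
    rw [hl1, hjt1, one_mul]
    push_cast
    ring_nf
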